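/- Let K be a field, λ, μ ∈ K nonzero, and k ≥ 1 an integer. Set q := λμ and t := λ + μ. Then the resultant with respect to X of the two polynomials qX² − tX + 1 and X^k − T, regarded as polynomials in X with coefficients in the polynomial ring K[T], equals q^k T² − (λ^k + μ^k) T + 1 in K[T]. -/

import Mathlib

open Polynomial Matrix

section Generic
variable {R : Type*} [CommRing R]

/-- Entry function for the `f`-rows of the Sylvester matrix. -/
def fEnt (a b : R) (i j : ℕ) : R :=
  (if j = i then a * b else 0) + (if j = i + 1 then -(a + b) else 0) +
    (if j = i + 2 then 1 else 0)

/-- Entry function for the `g`-rows of the Sylvester matrix. -/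
def gEnt (τ : R) (k r j : ℕ) : R :=
  (if j = r then 1 else 0) + (if j = r + k then -τ else 0)

variable (a b τ : R) (k : ℕ)

noncomputable def MsumM : Matrix (Fin k ⊕ Fin 2) (Fin k ⊕ Fin 2) R :=
  Matrix.fromBlocks
    (Matrix.of fun i j : Fin k => fEnt a b i j)
    (Matrix.of fun (i : Fin k) (c : Fin 2) => fEnt a b i (k + c))
    (Matrix.of fun (r : Fin 2) (j : Fin k) => gEnt τ k r j)
    (Matrix.of fun r c : Fin 2 => gEnt τ k r (k + c))

lemma split_sum (F : ℕ → R) (x : R) :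
    ((∑ j : Fin k, F j * x ^ (j : ℕ)) + ∑ r : Fin 2, F (k + r) * x ^ (k + (r : ℕ)))
      = ∑ j ∈ Finset.range (k + 2), F j * x ^ j := by
  rw [Fin.sum_univ_eq_sum_range (fun j => F j * x ^ j), Fin.sum_univ_two,
    Finset.sum_range_succ, Finset.sum_range_succ]
  simp only [Fin.val_zero, Fin.val_one, add_zero]
  ring

lemma sum_fEnt (x : R) (i : ℕ) (hi : i < k) :
    ∑ j ∈ Finset.range (k + 2), fEnt a b i j * x ^ j
      = a * b * x ^ i + (-(a + b)) * x ^ (i + 1) + 1 * x ^ (i + 2) := by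
  simp only [fEnt, add_mul, ite_mul, zero_mul]
  rw [Finset.sum_add_distrib, Finset.sum_add_distrib, Finset.sum_ite_eq',
    Finset.sum_ite_eq', Finset.sum_ite_eq']
  have h1 : i ∈ Finset.range (k + 2) := Finset.mem_range.2 (by omega)
  have h2 : i + 1 ∈ Finset.range (k + 2) := Finset.mem_range.2 (by omega)
  have h3 : i + 2 ∈ Finset.range (k + 2) := Finset.mem_range.2 (by omega)
  rw [if_pos h1, if_pos h2, if_pos h3]

lemma sum_gEnt (x : R) (r : ℕ) (hr : r < 2) :
    ∑ j ∈ Finset.range (k + 2), gEnt τ k r j * x ^ j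
      = 1 * x ^ r + (-τ) * x ^ (r + k) := by
  simp only [gEnt, add_mul, ite_mul, zero_mul]
  rw [Finset.sum_add_distrib, Finset.sum_ite_eq', Finset.sum_ite_eq']
  have h1 : r ∈ Finset.range (k + 2) := Finset.mem_range.2 (by omega)
  have h2 : r + k ∈ Finset.range (k + 2) := Finset.mem_range.2 (by omega)
  rw [if_pos h1, if_pos h2]

noncomputable def NsumM : Matrix (Fin k ⊕ Fin 2) (Fin k ⊕ Fin 2) R :=
  Matrix.fromBlocks 1
    (Matrix.of fun (i : Fin k) (c : Fin 2) => (![a, b] c) ^ (i : ℕ)) 0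
    (Matrix.of fun (r c : Fin 2) => (![a, b] c) ^ (k + (r : ℕ)))

lemma mul_N : MsumM a b τ k * NsumM a b k =
    Matrix.fromBlocks (Matrix.of fun i j : Fin k => fEnt a b i j) 0
      (Matrix.of fun (r : Fin 2) (j : Fin k) => gEnt τ k r j)
      (Matrix.of fun r c : Fin 2 =>
        (![a, b] c) ^ (r : ℕ) + (-τ) * (![a, b] c) ^ ((r : ℕ) + k)) := by
  rw [MsumM, NsumM, Matrix.fromBlocks_multiply]
  have h11 : ∀ (A : Matrix (Fin k) (Fin k) R) (B : Matrix (Fin k) (Fin 2) R),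
      A * 1 + B * (0 : Matrix (Fin 2) (Fin k) R) = A := by
    intro A B; rw [Matrix.mul_one, Matrix.mul_zero, add_zero]
  have h21 : ∀ (A : Matrix (Fin 2) (Fin k) R) (B : Matrix (Fin 2) (Fin 2) R),
      A * (1 : Matrix (Fin k) (Fin k) R) + B * (0 : Matrix (Fin 2) (Fin k) R) = A := by
    intro A B; rw [Matrix.mul_one, Matrix.mul_zero, add_zero]
  rw [h11, h21]
  have h12 : (Matrix.of fun i j : Fin k => fEnt a b i j) *
        (Matrix.of fun (i : Fin k) (c : Fin 2) => (![a, b] c) ^ (i : ℕ)) +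
      (Matrix.of fun (i : Fin k) (c : Fin 2) => fEnt a b i (k + c)) *
        (Matrix.of fun (r c : Fin 2) => (![a, b] c) ^ (k + (r : ℕ))) = 0 := by
    ext i c
    simp only [Matrix.add_apply, Matrix.mul_apply, Matrix.of_apply, Matrix.zero_apply]
    rw [split_sum k (fEnt a b i) (![a, b] c), sum_fEnt a b k (![a, b] c) i i.isLt]
    fin_cases c <;> simp <;> ring
  have h22 : (Matrix.of fun (r : Fin 2) (j : Fin k) => gEnt τ k r j) *
        (Matrix.of fun (i : Fin k) (c : Fin 2) => (![a, b] c) ^ (i : ℕ)) +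
      (Matrix.of fun r c : Fin 2 => gEnt τ k r (k + c)) *
        (Matrix.of fun (r c : Fin 2) => (![a, b] c) ^ (k + (r : ℕ))) =
      (Matrix.of fun r c : Fin 2 =>
        (![a, b] c) ^ (r : ℕ) + (-τ) * (![a, b] c) ^ ((r : ℕ) + k)) := by
    ext r c
    simp only [Matrix.add_apply, Matrix.mul_apply, Matrix.of_apply]
    rw [split_sum k (gEnt τ k r) (![a, b] c), sum_gEnt τ k (![a, b] c) r r.isLt, one_mul]
  rw [h12, h22]

lemma det_A1 : (Matrix.of fun i j : Fin k => fEnt a b i j).det = (a * b) ^ k := by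
  rw [Matrix.det_of_upperTriangular]
  · have : ∀ i : Fin k, fEnt a b i i = a * b := by
      intro i; simp [fEnt]
    simp only [Matrix.of_apply, this]
    simp
  · intro i j hij
    have hij' : (j : ℕ) < (i : ℕ) := hij
    simp only [Matrix.of_apply, fEnt]
    rw [if_neg (by omega), if_neg (by omega), if_neg (by omega)]
    simp

lemma key_identity :
    (MsumM a b τ k).det * (a ^ k * b ^ (k + 1) - b ^ k * a ^ (k + 1)) =
      ((a * b) ^ k * τ ^ 2 - (a ^ k + b ^ k) * τ + 1) *
        (a ^ k * b ^ (k + 1) - b ^ k * a ^ (k + 1)) := by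
  have hN : (NsumM a b k).det = a ^ k * b ^ (k + 1) - b ^ k * a ^ (k + 1) := by
    rw [NsumM, Matrix.det_fromBlocks_zero₂₁, Matrix.det_one, one_mul,
      Matrix.det_fin_two]
    simp
  have hP := congrArg Matrix.det (mul_N a b τ k)
  rw [Matrix.det_mul, hN, Matrix.det_fromBlocks_zero₁₂, det_A1,
    Matrix.det_fin_two] at hP
  rw [hP]
  simp only [Matrix.of_apply]
  simp only [Fin.isValue, Matrix.cons_val_zero, Matrix.cons_val_one, Matrix.head_cons,
    Fin.val_zero, Fin.val_one, pow_zero, zero_add]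
  rw [pow_succ, pow_succ, mul_pow]
  ring

end Generic

lemma map_MsumM {R S : Type*} [CommRing R] [CommRing S] (φ : R →+* S) (a b τ : R) (k : ℕ) :
    (MsumM a b τ k).map φ = MsumM (φ a) (φ b) (φ τ) k := by
  ext p q
  cases p <;> cases q <;>
    simp [MsumM, fEnt, gEnt, apply_ite φ, map_add, _root_.map_mul, map_neg, _root_.map_one]

lemma gen_det (k : ℕ) :
    (MsumM (MvPolynomial.X 0) (MvPolynomial.X 1) (MvPolynomial.X 2) k :
        Matrix _ _ (MvPolynomial (Fin 3) ℤ)).det =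
      (MvPolynomial.X 0 * MvPolynomial.X 1) ^ k * MvPolynomial.X 2 ^ 2 -
        (MvPolynomial.X 0 ^ k + MvPolynomial.X 1 ^ k) * MvPolynomial.X 2 + 1 := by
  set a : MvPolynomial (Fin 3) ℤ := MvPolynomial.X 0 with ha
  set b : MvPolynomial (Fin 3) ℤ := MvPolynomial.X 1 with hb
  set τ : MvPolynomial (Fin 3) ℤ := MvPolynomial.X 2 with hτ
  have hc : a ^ k * b ^ (k + 1) - b ^ k * a ^ (k + 1) ≠ 0 := by
    have h : a ^ k * b ^ (k + 1) - b ^ k * a ^ (k + 1) = a ^ k * b ^ k * (b - a) := by ring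
    rw [h]
    refine mul_ne_zero (mul_ne_zero (pow_ne_zero _ (MvPolynomial.X_ne_zero _))
      (pow_ne_zero _ (MvPolynomial.X_ne_zero _))) (sub_ne_zero.mpr ?_)
    intro h'
    have := MvPolynomial.X_injective h'
    exact (by decide : (1 : Fin 3) ≠ 0) this
  exact mul_right_cancel₀ hc (key_identity a b τ k)

lemma det_MsumM {R : Type*} [CommRing R] (a b τ : R) (k : ℕ) :
    (MsumM a b τ k).det = (a * b) ^ k * τ ^ 2 - (a ^ k + b ^ k) * τ + 1 := by
  let φ : MvPolynomial (Fin 3) ℤ →+* R := MvPolynomial.eval₂Hom (Int.castRingHom R) ![a, b, τ]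
  have h := congrArg φ (gen_det k)
  rw [RingHom.map_det, RingHom.mapMatrix_apply, map_MsumM] at h
  have hx0 : φ (MvPolynomial.X 0) = a := by simp [φ]
  have hx1 : φ (MvPolynomial.X 1) = b := by simp [φ]
  have hx2 : φ (MvPolynomial.X 2) = τ := by simp [φ]
  rw [hx0, hx1, hx2] at h
  rw [h]
  simp [hx0, hx1, hx2]


/-- The Sylvester matrix of two polynomials `f`, `g` over a commutative ring, with respect to
the degree bounds `m` for `f` and `n` for `g`: its first `n` rows are the shifted coefficient
vectors of `f` and its last `m` rows are the shifted coefficient vectors of `g`. -/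
noncomputable def sylvesterMatrix {R : Type*} [CommRing R] (f g : Polynomial R) (m n : ℕ) :
    Matrix (Fin (n + m)) (Fin (n + m)) R :=
  Matrix.of fun i j =>
    if (i : ℕ) < n then
      if (i : ℕ) ≤ (j : ℕ) ∧ (j : ℕ) ≤ (i : ℕ) + m then f.coeff (m + i - j) else 0
    else
      if (i : ℕ) - n ≤ (j : ℕ) ∧ (j : ℕ) ≤ ((i : ℕ) - n) + n then
        g.coeff (n + ((i : ℕ) - n) - j) else 0

/-- The resultant of two polynomials `f`, `g` over a commutative ring: the determinant of their
Sylvester matrix (taken with respect to their natural degrees). -/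
noncomputable def Polynomial.sylvesterResultant {R : Type*} [CommRing R] (f g : Polynomial R) : R :=
  (sylvesterMatrix f g f.natDegree g.natDegree).det

/-- Let `K` be a field, `λ, μ ∈ K` nonzero, `k ≥ 1`, `q = λμ`, `t = λ + μ`.
Then the resultant in `X` of `qX² − tX + 1` and `X^k − T`, as polynomials in `X` over `K[T]`,
equals `q^k T² − (λ^k + μ^k) T + 1` in `K[T]`. -/
theorem resultant_zeta_extension {K : Type*} [Field K] (l μ : K) (hl : l ≠ 0) (hμ : μ ≠ 0)
    (k : ℕ) (hk : 1 ≤ k) (q t : K) (hq : q = l * μ) (ht : t = l + μ) :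
    Polynomial.sylvesterResultant
        (C (C q) * X ^ 2 - C (C t) * X + 1 : Polynomial (Polynomial K))
        (X ^ k - C X : Polynomial (Polynomial K)) =
      C (q ^ k) * X ^ 2 - C (l ^ k + μ ^ k) * X + 1 := by
  have hq0 : q ≠ 0 := by rw [hq]; exact mul_ne_zero hl hμ
  -- degrees
  have hdf : (C (C q) * X ^ 2 - C (C t) * X + 1 : Polynomial (Polynomial K)).natDegree = 2 := by
    have h : (C (C q) * X ^ 2 - C (C t) * X + 1 : Polynomial (Polynomial K)) =
        C (C q) * X ^ 2 + C (-C t) * X + C 1 := by rw [Polynomial.C_neg, Polynomial.C_1]; ring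
    rw [h, Polynomial.natDegree_quadratic (Polynomial.C_ne_zero.mpr hq0)]
  have hdg : (X ^ k - C X : Polynomial (Polynomial K)).natDegree = k :=
    Polynomial.natDegree_X_pow_sub_C
  -- coefficients of f
  have c2 : (C (C q) * X ^ 2 - C (C t) * X + 1 : Polynomial (Polynomial K)).coeff 2 = C q := by
    simp [coeff_one]
  have c1 : (C (C q) * X ^ 2 - C (C t) * X + 1 : Polynomial (Polynomial K)).coeff 1 = -C t := by
    simp [coeff_one]
  have c0 : (C (C q) * X ^ 2 - C (C t) * X + 1 : Polynomial (Polynomial K)).coeff 0 = 1 := by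
    simp [coeff_one]
  -- row-entry lemmas at the level of natural numbers
  have hf : ∀ i j : ℕ,
      (if i ≤ j ∧ j ≤ i + 2 then
          (C (C q) * X ^ 2 - C (C t) * X + 1 : Polynomial (Polynomial K)).coeff (2 + i - j)
        else 0) = fEnt (C l) (C μ) i j := by
    intro i j
    by_cases h0 : j = i
    · subst h0
      rw [if_pos ⟨le_refl _, by omega⟩]
      have : 2 + j - j = 2 := by omega
      rw [this, c2, fEnt, if_pos rfl, if_neg (by omega), if_neg (by omega)]
      rw [hq, Polynomial.C_mul]; ring
    · by_cases h1 : j = i + 1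
      · subst h1
        rw [if_pos ⟨by omega, by omega⟩]
        have : 2 + i - (i + 1) = 1 := by omega
        rw [this, c1, fEnt, if_neg (by omega), if_pos rfl, if_neg (by omega)]
        rw [ht, Polynomial.C_add]; ring
      · by_cases h2 : j = i + 2
        · subst h2
          rw [if_pos ⟨by omega, by omega⟩]
          have : 2 + i - (i + 2) = 0 := by omega
          rw [this, c0, fEnt, if_neg (by omega), if_neg (by omega), if_pos rfl]
          ring
        · rw [if_neg (by omega), fEnt, if_neg h0, if_neg h1, if_neg h2]
          simp
  have hg : ∀ r j : ℕ,
      (if r ≤ j ∧ j ≤ r + k then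
          (X ^ k - C X : Polynomial (Polynomial K)).coeff (k + r - j) else 0)
        = gEnt (X : Polynomial K) k r j := by
    intro r j
    by_cases h0 : j = r
    · subst h0
      rw [if_pos ⟨le_refl _, by omega⟩]
      have : k + j - j = k := by omega
      rw [this, gEnt, if_pos rfl, if_neg (by omega)]
      have hk0 : ¬k = 0 := by omega
      simp [coeff_X_pow, Polynomial.coeff_C, hk0]
    · by_cases h1 : j = r + k
      · subst h1
        rw [if_pos ⟨by omega, le_refl _⟩]
        have : k + r - (r + k) = 0 := by omega
        rw [this, gEnt, if_neg (by omega), if_pos rfl]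
        have hk0 : ¬(0 = k) := by omega
        simp [coeff_X_pow, hk0]
      · rw [gEnt, if_neg h0, if_neg h1]
        by_cases hband : r ≤ j ∧ j ≤ r + k
        · rw [if_pos hband]
          have h2 : k + r - j ≠ 0 := by omega
          have h3 : k + r - j ≠ k := by omega
          simp [coeff_X_pow, Polynomial.coeff_C, h2, h3, Ne.symm h3]
        · rw [if_neg hband]; simp
  -- identify the Sylvester matrix with MsumM
  have hsyl : sylvesterMatrix (C (C q) * X ^ 2 - C (C t) * X + 1 : Polynomial (Polynomial K))
        (X ^ k - C X : Polynomial (Polynomial K)) 2 k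
      = (MsumM (C l) (C μ) (X : Polynomial K) k).submatrix
          finSumFinEquiv.symm finSumFinEquiv.symm := by
    refine Matrix.ext fun i j => ?_
    obtain ⟨p, rfl⟩ := finSumFinEquiv.surjective i
    obtain ⟨p', rfl⟩ := finSumFinEquiv.surjective j
    rw [Matrix.submatrix_apply, Equiv.symm_apply_apply, Equiv.symm_apply_apply]
    cases p with
    | inl i =>
      cases p' with
      | inl j =>
        simp only [sylvesterMatrix, Matrix.of_apply, finSumFinEquiv_apply_left,
          Fin.coe_castAdd, MsumM, Matrix.fromBlocks_apply₁₁]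
        rw [if_pos i.isLt]
        exact hf i j
      | inr c =>
        simp only [sylvesterMatrix, Matrix.of_apply, finSumFinEquiv_apply_left,
          finSumFinEquiv_apply_right, Fin.coe_castAdd, Fin.coe_natAdd, MsumM,
          Matrix.fromBlocks_apply₁₂]
        rw [if_pos i.isLt]
        exact hf i (k + c)
    | inr r =>
      cases p' with
      | inl j =>
        simp only [sylvesterMatrix, Matrix.of_apply, finSumFinEquiv_apply_right,
          finSumFinEquiv_apply_left, Fin.coe_castAdd, Fin.coe_natAdd, MsumM,
          Matrix.fromBlocks_apply₂₁]
        rw [if_neg (by omega)]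
        have h1 : k + (r : ℕ) - k = (r : ℕ) := by omega
        rw [h1]
        exact hg r j
      | inr c =>
        simp only [sylvesterMatrix, Matrix.of_apply, finSumFinEquiv_apply_right,
          Fin.coe_natAdd, MsumM, Matrix.fromBlocks_apply₂₂]
        rw [if_neg (by omega)]
        have h1 : k + (r : ℕ) - k = (r : ℕ) := by omega
        rw [h1]
        exact hg r (k + c)
  have hres : ∀ (m n : ℕ),
      (C (C q) * X ^ 2 - C (C t) * X + 1 : Polynomial (Polynomial K)).natDegree = m →
      (X ^ k - C X : Polynomial (Polynomial K)).natDegree = n →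
      Polynomial.sylvesterResultant
          (C (C q) * X ^ 2 - C (C t) * X + 1 : Polynomial (Polynomial K))
          (X ^ k - C X : Polynomial (Polynomial K)) =
        (sylvesterMatrix (C (C q) * X ^ 2 - C (C t) * X + 1 : Polynomial (Polynomial K))
          (X ^ k - C X : Polynomial (Polynomial K)) m n).det := by
    intro m n hm hn
    rw [Polynomial.sylvesterResultant, hm, hn]
  rw [hres 2 k hdf hdg, hsyl, Matrix.det_submatrix_equiv_self, det_MsumM]
  rw [hq]
  simp only [Polynomial.C_mul, Polynomial.C_add, Polynomial.C_pow]
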